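/- Let G be a countable group, let ≼ be an isolated left order on G, and let ρ : G → Homeo₊(ℝ) be a dynamical realization of ≼, i.e. a fixed-point-free representation such that for all f, g ∈ G one has f ≺ g if and only if ρ(f)(0) < ρ(g)(0). Then ρ is locally rigid: there exist a finite set S ⊆ G, a compact set K ⊆ ℝ and ε > 0 such that every fixed-point-free homomorphism ρ' : G → Homeo₊(ℝ) satisfying |ρ'(s)(x) − ρ(s)(x)| < ε for all s ∈ S and all x ∈ K is semi-conjugate to ρ. -/

import Mathlib

/-- A left-invariant total order on a group `G`. -/
structure LeftOrder (G : Type*) [Group G] where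
  le : G → G → Prop
  refl : ∀ a, le a a
  trans : ∀ a b c, le a b → le b c → le a c
  antisymm : ∀ a b, le a b → le b a → a = b
  total : ∀ a b, le a b ∨ le b a
  mul_le_mul_left : ∀ a b, le a b → ∀ g, le (g * a) (g * b)

/-- The strict order associated to a left order. -/
def LeftOrder.lt {G : Type*} [Group G] (o : LeftOrder G) (a b : G) : Prop :=
  o.le a b ∧ a ≠ b

/-- A left order is isolated if it is the unique left order making each element of some
finite set of its positive elements positive. -/
def LeftOrder.Isolated {G : Type*} [Group G] (o : LeftOrder G) : Prop :=
  ∃ S : Finset G, (∀ s ∈ S, o.lt 1 s) ∧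
    ∀ o' : LeftOrder G, (∀ s ∈ S, o'.lt 1 s) → o'.le = o.le

/-- A representation is fixed-point-free if it has no global fixed point. -/
def FixedPointFree {G : Type*} [Group G] (ρ : G →* (ℝ ≃o ℝ)) : Prop :=
  ¬ ∃ x : ℝ, ∀ g : G, ρ g x = x

/-- A non-decreasing map `c : ℝ → ℝ` is proper if its image is unbounded above and below. -/
def IsProperMonotone (c : ℝ → ℝ) : Prop :=
  Monotone c ∧ ¬ BddAbove (Set.range c) ∧ ¬ BddBelow (Set.range c)

/-- Semi-conjugacy of representations. -/
def SemiConjugate {G : Type*} [Group G] (ρ₁ ρ₂ : G →* (ℝ ≃o ℝ)) : Prop :=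
  ∃ c : ℝ → ℝ, IsProperMonotone c ∧ ∀ (g : G) (x : ℝ), c (ρ₁ g x) = ρ₂ g (c x)

section Aux

variable {G : Type*} [Group G]

lemma rho_mul_apply (ρ : G →* (ℝ ≃o ℝ)) (g h : G) (x : ℝ) :
    ρ (g * h) x = ρ g (ρ h x) := by
  rw [map_mul]; rfl

lemma rho_orbit_eq (ρ : G →* (ℝ ≃o ℝ)) (h : G) (x₀ : ℝ) :
    (ρ h) '' (Set.range fun g => ρ g x₀) = Set.range fun g => ρ g x₀ := by
  ext y
  constructor
  · rintro ⟨_, ⟨g, rfl⟩, rfl⟩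
    exact ⟨h * g, by simpa using (rho_mul_apply ρ h g x₀).symm⟩
  · rintro ⟨g, rfl⟩
    exact ⟨ρ (h⁻¹ * g) x₀, ⟨h⁻¹ * g, rfl⟩, by
      rw [← rho_mul_apply ρ h (h⁻¹ * g) x₀, mul_inv_cancel_left]⟩

lemma orbit_not_bddAbove (ρ : G →* (ℝ ≃o ℝ)) (hfree : FixedPointFree ρ) (x₀ : ℝ) :
    ¬ BddAbove (Set.range fun g => ρ g x₀) := by
  intro hbdd
  apply hfree
  refine ⟨sSup (Set.range fun g => ρ g x₀), fun h => ?_⟩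
  have hne : (Set.range fun g => ρ g x₀).Nonempty := ⟨ρ 1 x₀, 1, rfl⟩
  rw [(ρ h).map_csSup' hne hbdd, rho_orbit_eq]

lemma orbit_not_bddBelow (ρ : G →* (ℝ ≃o ℝ)) (hfree : FixedPointFree ρ) (x₀ : ℝ) :
    ¬ BddBelow (Set.range fun g => ρ g x₀) := by
  intro hbdd
  apply hfree
  refine ⟨sInf (Set.range fun g => ρ g x₀), fun h => ?_⟩
  have hne : (Set.range fun g => ρ g x₀).Nonempty := ⟨ρ 1 x₀, 1, rfl⟩
  rw [(ρ h).map_csInf' hne hbdd, rho_orbit_eq]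

/-- Given the dynamical realization order and a perturbed action, the lexicographic
order (orbit position of `0`, ties broken by `o`) is a left order. -/
def perturbedOrder (o : LeftOrder G) (ρ' : G →* (ℝ ≃o ℝ)) : LeftOrder G where
  le f g := ρ' f 0 < ρ' g 0 ∨ (ρ' f 0 = ρ' g 0 ∧ o.le f g)
  refl a := Or.inr ⟨rfl, o.refl a⟩
  trans a b c hab hbc := by
    rcases hab with h1 | ⟨e1, l1⟩
    · rcases hbc with h2 | ⟨e2, l2⟩
      · exact Or.inl (h1.trans h2)
      · exact Or.inl (e2 ▸ h1)
    · rcases hbc with h2 | ⟨e2, l2⟩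
      · exact Or.inl (e1 ▸ h2)
      · exact Or.inr ⟨e1.trans e2, o.trans _ _ _ l1 l2⟩
  antisymm a b hab hba := by
    rcases hab with h1 | ⟨e1, l1⟩
    · rcases hba with h2 | ⟨e2, l2⟩
      · exact absurd (h1.trans h2) (lt_irrefl _)
      · exact absurd e2 (ne_of_gt h1)
    · rcases hba with h2 | ⟨e2, l2⟩
      · exact absurd e1 (ne_of_gt h2)
      · exact o.antisymm _ _ l1 l2
  total a b := by
    rcases lt_trichotomy (ρ' a 0) (ρ' b 0) with h | h | h
    · exact Or.inl (Or.inl h)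
    · rcases o.total a b with h' | h'
      · exact Or.inl (Or.inr ⟨h, h'⟩)
      · exact Or.inr (Or.inr ⟨h.symm, h'⟩)
    · exact Or.inr (Or.inl h)
  mul_le_mul_left a b hab g := by
    rcases hab with h | ⟨e, l⟩
    · exact Or.inl (by
        rw [rho_mul_apply ρ' g a 0, rho_mul_apply ρ' g b 0]
        exact (ρ' g).strictMono h)
    · exact Or.inr ⟨by rw [rho_mul_apply ρ' g a 0, rho_mul_apply ρ' g b 0, e],
        o.mul_le_mul_left a b l g⟩

end Aux

/-- The dynamical realization of an isolated left order of a countable group is locally rigid. -/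
theorem isolated_order_dynamical_realization_locally_rigid
    {G : Type*} [Group G] [Countable G]
    (o : LeftOrder G) (hiso : o.Isolated)
    (ρ : G →* (ℝ ≃o ℝ)) (hfree : FixedPointFree ρ)
    (hreal : ∀ f g : G, o.lt f g ↔ ρ f 0 < ρ g 0) :
    ∃ (S : Finset G) (K : Set ℝ) (ε : ℝ), IsCompact K ∧ 0 < ε ∧
      ∀ ρ' : G →* (ℝ ≃o ℝ), FixedPointFree ρ' →
        (∀ s ∈ S, ∀ x ∈ K, |ρ' s x - ρ s x| < ε) →
        SemiConjugate ρ' ρ := by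
  obtain ⟨S, hSpos, hSuniq⟩ := hiso
  have hρ10 : ρ (1 : G) 0 = 0 := by rw [map_one]; rfl
  -- each s ∈ S has ρ s 0 > 0
  have hpos : ∀ s ∈ S, 0 < ρ s 0 := fun s hs => by
    have := (hreal 1 s).mp (hSpos s hs)
    rwa [hρ10] at this
  -- choose ε
  set T : Finset ℝ := insert (1 : ℝ) (S.image fun s => ρ s 0) with hT
  have hTne : T.Nonempty := ⟨1, Finset.mem_insert_self _ _⟩
  refine ⟨S, {0}, T.min' hTne, isCompact_singleton, ?_, ?_⟩
  · -- positivity of ε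
    have := T.min'_mem hTne
    rcases Finset.mem_insert.mp this with h | h
    · rw [h]; exact one_pos
    · obtain ⟨s, hs, he⟩ := Finset.mem_image.mp h
      rw [← he]; exact hpos s hs
  · intro ρ' hfree' hclose
    -- ρ' s 0 > 0 for s ∈ S
    have hpos' : ∀ s ∈ S, 0 < ρ' s 0 := by
      intro s hs
      have h1 := hclose s hs 0 rfl
      have h2 : T.min' hTne ≤ ρ s 0 :=
        Finset.min'_le _ _ (Finset.mem_insert_of_mem (Finset.mem_image_of_mem _ hs))
      have := abs_lt.mp h1
      linarith [this.1]
    -- perturbed order agrees with o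
    set o' := perturbedOrder o ρ' with ho'
    have ho'pos : ∀ s ∈ S, o'.lt 1 s := by
      intro s hs
      refine ⟨Or.inl ?_, ?_⟩
      · show ρ' 1 0 < ρ' s 0
        rw [map_one]
        exact hpos' s hs
      · intro h
        exact absurd ((h ▸ hpos' s hs) : (0:ℝ) < ρ' 1 0) (by rw [map_one]; exact lt_irrefl 0)
    have hle : o'.le = o.le := hSuniq o' ho'pos
    -- key order transfer: ρ' f 0 < ρ' g 0 → ρ f 0 < ρ g 0
    have htrans : ∀ f g : G, ρ' f 0 < ρ' g 0 → ρ f 0 < ρ g 0 := by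
      intro f g h
      have hfg : f ≠ g := fun e => absurd (e ▸ h) (lt_irrefl _)
      have : o'.le f g := Or.inl h
      rw [hle] at this
      exact (hreal f g).mp ⟨this, hfg⟩
    -- the semi-conjugacy
    set A : ℝ → Set ℝ := fun x => (fun g => ρ g 0) '' {g : G | ρ' g 0 ≤ x} with hA
    have hAne : ∀ x, (A x).Nonempty := by
      intro x
      have := orbit_not_bddBelow ρ' hfree' 0
      rw [not_bddBelow_iff] at this
      obtain ⟨y, ⟨g, rfl⟩, hy⟩ := this x
      exact ⟨ρ g 0, g, le_of_lt hy, rfl⟩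
    have hAbdd : ∀ x, BddAbove (A x) := by
      intro x
      have := orbit_not_bddAbove ρ' hfree' 0
      rw [not_bddAbove_iff] at this
      obtain ⟨y, ⟨h, rfl⟩, hy⟩ := this x
      refine ⟨ρ h 0, ?_⟩
      rintro z ⟨g, hg, rfl⟩
      exact le_of_lt (htrans g h (lt_of_le_of_lt hg hy))
    set c : ℝ → ℝ := fun x => sSup (A x) with hc
    have hmono : Monotone c := by
      intro x y hxy
      exact csSup_le_csSup (hAbdd y) (hAne x)
        (Set.image_mono (fun g hg => le_trans hg hxy))
    refine ⟨c, ⟨hmono, ?_, ?_⟩, ?_⟩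
    · -- not BddAbove (range c)
      rintro ⟨M, hM⟩
      have := orbit_not_bddAbove ρ hfree 0
      rw [not_bddAbove_iff] at this
      obtain ⟨y, ⟨g, rfl⟩, hy⟩ := this M
      have h1 : ρ g 0 ≤ c (ρ' g 0) :=
        le_csSup (hAbdd _) ⟨g, show (ρ' g) 0 ≤ (ρ' g) 0 from le_rfl, rfl⟩
      have h2 : c (ρ' g 0) ≤ M := hM ⟨ρ' g 0, rfl⟩
      linarith
    · -- not BddBelow (range c)
      rintro ⟨M, hM⟩
      have := orbit_not_bddBelow ρ hfree 0
      rw [not_bddBelow_iff] at this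
      obtain ⟨y, ⟨h, rfl⟩, hy⟩ := this M
      have hub : c (ρ' h 0 - 1) ≤ ρ h 0 := by
        apply csSup_le (hAne _)
        rintro z ⟨g, hg, rfl⟩
        exact le_of_lt (htrans g h (lt_of_le_of_lt hg (by linarith)))
      have h2 : M ≤ c (ρ' h 0 - 1) := hM ⟨ρ' h 0 - 1, rfl⟩
      linarith
    · -- equivariance
      intro g x
      have hset : {h : G | ρ' h 0 ≤ ρ' g x} = (fun k => g * k) '' {k : G | ρ' k 0 ≤ x} := by
        ext h
        simp only [Set.mem_setOf_eq, Set.mem_image]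
        constructor
        · intro hh
          refine ⟨g⁻¹ * h, ?_, by rw [mul_inv_cancel_left]⟩
          have : ρ' g⁻¹ (ρ' h 0) ≤ ρ' g⁻¹ (ρ' g x) := (ρ' g⁻¹).monotone hh
          rwa [← rho_mul_apply, ← rho_mul_apply, inv_mul_cancel, map_one,
            show ((1 : ℝ ≃o ℝ) x = x) from rfl] at this
        · rintro ⟨k, hk, rfl⟩
          rw [rho_mul_apply]
          exact (ρ' g).monotone hk
      have himg : A (ρ' g x) = (ρ g) '' (A x) := by
        rw [hA]
        simp only
        rw [hset, ← Set.image_comp, ← Set.image_comp]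
        congr 1
        ext k
        simp [rho_mul_apply]
      show c (ρ' g x) = ρ g (c x)
      rw [hc]
      simp only
      rw [himg, (ρ g).map_csSup' (hAne x) (hAbdd x)]
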